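/- Let G be a k-regular connected vertex-transitive finite simple graph that is neither a complete graph nor a cycle. Then every minimum edge cut of G isolates a single vertex if and only if G contains no clique of size k. -/

import Mathlib

open SimpleGraph

variable {V : Type*}

/-- `G` has a perfect matching. -/
def HasPerfectMatching (G : SimpleGraph V) : Prop :=
  ∃ M : G.Subgraph, M.IsPerfectMatching

/-- `F` is a matching preclusion set of `G`. -/
def IsMPSet (G : SimpleGraph V) (F : Finset (Sym2 V)) : Prop :=
  ↑F ⊆ G.edgeSet ∧ ¬ HasPerfectMatching (G.deleteEdges ↑F)

/-- The matching preclusion number of `G`. -/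
noncomputable def mpNumber (G : SimpleGraph V) : ℕ :=
  sInf {n | ∃ F : Finset (Sym2 V), IsMPSet G F ∧ F.card = n}

/-- `G` is `k`-regular. -/
def GIsRegular (G : SimpleGraph V) (k : ℕ) : Prop :=
  ∀ v : V, (G.neighborSet v).ncard = k

/-- `G` is vertex-transitive. -/
def VertexTransitive (G : SimpleGraph V) : Prop :=
  ∀ x y : V, ∃ φ : G ≃g G, φ x = y

/-- The minimum degree of `G`. -/
noncomputable def minDeg (G : SimpleGraph V) : ℕ :=
  sInf {d | ∃ v : V, (G.neighborSet v).ncard = d}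

/-- `F` is an edge cut of `G`: the set of all edges between `X` and its complement,
for some `X` with both `X` and `Xᶜ` nonempty. -/
def IsEdgeCut (G : SimpleGraph V) (F : Set (Sym2 V)) : Prop :=
  ∃ X : Set V, X.Nonempty ∧ Xᶜ.Nonempty ∧
    F = {e | ∃ a ∈ X, ∃ b ∈ Xᶜ, G.Adj a b ∧ e = s(a, b)}

/-- The edge-connectivity of `G`. -/
noncomputable def edgeConnectivity (G : SimpleGraph V) : ℕ :=
  sInf {n | ∃ F : Finset (Sym2 V), ↑F ⊆ G.edgeSet ∧ F.card = n ∧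
    ¬ (G.deleteEdges ↑F).Connected}

set_option linter.unusedSectionVars false
set_option linter.unusedVariables false

section Cut
variable [Fintype V] [DecidableEq V] (G : SimpleGraph V) [DecidableRel G.Adj]

/-- ordered crossing pairs -/
def cutPairs (X : Finset V) : Finset (V × V) :=
  Finset.univ.filter fun p => G.Adj p.1 p.2 ∧ p.1 ∈ X ∧ p.2 ∉ X

def dcut (X : Finset V) : ℕ := (cutPairs G X).card

def cutEdges (X : Finset V) : Finset (Sym2 V) :=
  (cutPairs G X).image fun p => s(p.1, p.2)

lemma mem_cutPairs {X : Finset V} {p : V × V} :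
    p ∈ cutPairs G X ↔ G.Adj p.1 p.2 ∧ p.1 ∈ X ∧ p.2 ∉ X := by
  simp [cutPairs]

lemma mem_cutEdges {X : Finset V} {e : Sym2 V} :
    e ∈ cutEdges G X ↔ ∃ a ∈ X, ∃ b, b ∉ X ∧ G.Adj a b ∧ e = s(a, b) := by
  simp only [cutEdges, Finset.mem_image, mem_cutPairs]
  constructor
  · rintro ⟨⟨a, b⟩, ⟨h1, h2, h3⟩, rfl⟩
    exact ⟨a, h2, b, h3, h1, rfl⟩
  · rintro ⟨a, h2, b, h3, h1, rfl⟩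
    exact ⟨(a, b), ⟨h1, h2, h3⟩, rfl⟩

lemma card_cutEdges (X : Finset V) : (cutEdges G X).card = dcut G X := by
  rw [cutEdges, Finset.card_image_of_injOn, dcut]
  rintro ⟨a, b⟩ hab ⟨c, d⟩ hcd h
  rw [Finset.mem_coe, mem_cutPairs] at hab hcd
  rw [Sym2.eq_iff] at h
  rcases h with ⟨rfl, rfl⟩ | ⟨rfl, rfl⟩
  · rfl
  · exact absurd hab.2.1 hcd.2.2

lemma cutEdges_subset_edgeSet (X : Finset V) : ↑(cutEdges G X) ⊆ G.edgeSet := by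
  intro e he
  rw [Finset.mem_coe, mem_cutEdges] at he
  obtain ⟨a, _, b, _, hab, rfl⟩ := he
  exact hab

lemma dcut_compl (X : Finset V) : dcut G Xᶜ = dcut G X := by
  unfold dcut
  apply Finset.card_bij (fun p _ => (p.2, p.1))
  · rintro ⟨a, b⟩ h
    rw [mem_cutPairs] at h ⊢
    simp only [Finset.mem_compl] at h
    exact ⟨h.1.symm, by simpa using h.2.2, by simpa using h.2.1⟩
  · rintro ⟨a, b⟩ h ⟨c, d⟩ h' hh
    simp only [Prod.mk.injEq] at hh
    exact Prod.ext hh.2 hh.1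
  · rintro ⟨a, b⟩ h
    rw [mem_cutPairs] at h
    refine ⟨(b, a), ?_, rfl⟩
    rw [mem_cutPairs]
    simp only [Finset.mem_compl]
    exact ⟨h.1.symm, h.2.2, by simpa using h.2.1⟩

lemma dcut_eq_sum_ite (X : Finset V) :
    dcut G X = ∑ p : V × V, if G.Adj p.1 p.2 ∧ p.1 ∈ X ∧ p.2 ∉ X then 1 else 0 := by
  rw [dcut, cutPairs, Finset.card_filter]

lemma dcut_submodular (X Y : Finset V) :
    dcut G (X ∩ Y) + dcut G (X ∪ Y) ≤ dcut G X + dcut G Y := by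
  simp only [dcut_eq_sum_ite, ← Finset.sum_add_distrib]
  apply Finset.sum_le_sum
  rintro ⟨a, b⟩ _
  by_cases h : G.Adj a b
  · simp only [Finset.mem_inter, Finset.mem_union]
    by_cases h1 : a ∈ X <;> by_cases h2 : a ∈ Y <;> by_cases h3 : b ∈ X <;>
      by_cases h4 : b ∈ Y <;> simp [h, h1, h2, h3, h4]
  · simp [h]

lemma dcut_swap_sum (X : Finset V) :
    dcut G X = ∑ p : V × V, if G.Adj p.1 p.2 ∧ p.2 ∈ X ∧ p.1 ∉ X then 1 else 0 := by
  rw [← Finset.card_filter]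
  unfold dcut
  apply Finset.card_bij (fun p _ => (p.2, p.1))
  · rintro ⟨a, b⟩ h
    rw [mem_cutPairs] at h
    simp only [Finset.mem_filter, Finset.mem_univ, true_and]
    exact ⟨h.1.symm, h.2.1, h.2.2⟩
  · rintro ⟨a, b⟩ _ ⟨c, d⟩ _ hh
    simp only [Prod.mk.injEq] at hh
    exact Prod.ext hh.2 hh.1
  · rintro ⟨a, b⟩ h
    simp only [Finset.mem_filter, Finset.mem_univ, true_and] at h
    refine ⟨(b, a), ?_, rfl⟩
    rw [mem_cutPairs]
    exact ⟨h.1.symm, h.2.1, h.2.2⟩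

lemma dcut_posimodular (X Y : Finset V) :
    dcut G (X \ Y) + dcut G (Y \ X) ≤ dcut G X + dcut G Y := by
  have key : 2 * (dcut G (X \ Y) + dcut G (Y \ X)) ≤ 2 * (dcut G X + dcut G Y) := by
    have e1 : ∀ Z : Finset V, 2 * dcut G Z
        = ∑ p : V × V, ((if G.Adj p.1 p.2 ∧ p.1 ∈ Z ∧ p.2 ∉ Z then 1 else 0)
          + (if G.Adj p.1 p.2 ∧ p.2 ∈ Z ∧ p.1 ∉ Z then 1 else 0)) := by
      intro Z
      rw [Finset.sum_add_distrib, ← dcut_eq_sum_ite, ← dcut_swap_sum, two_mul]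
    rw [Nat.mul_add, e1, e1, Nat.mul_add, e1, e1, ← Finset.sum_add_distrib,
      ← Finset.sum_add_distrib]
    apply Finset.sum_le_sum
    rintro ⟨a, b⟩ _
    by_cases h : G.Adj a b
    · simp only [Finset.mem_sdiff]
      by_cases h1 : a ∈ X <;> by_cases h2 : a ∈ Y <;> by_cases h3 : b ∈ X <;>
        by_cases h4 : b ∈ Y <;> simp [h, h1, h2, h3, h4]
    · simp [h]
  omega

end Cut

section Deg
variable [Fintype V] [DecidableEq V] {G : SimpleGraph V} [DecidableRel G.Adj]

def outdeg (G : SimpleGraph V) [DecidableRel G.Adj] (X : Finset V) (x : V) : ℕ :=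
  (Finset.univ.filter fun b => G.Adj x b ∧ b ∉ X).card

def indeg (G : SimpleGraph V) [DecidableRel G.Adj] (X : Finset V) (x : V) : ℕ :=
  (Finset.univ.filter fun b => G.Adj x b ∧ b ∈ X).card

lemma indeg_add_outdeg (X : Finset V) (x : V) :
    indeg G X x + outdeg G X x = (Finset.univ.filter fun b => G.Adj x b).card := by
  unfold indeg outdeg
  rw [show (Finset.univ.filter fun b => G.Adj x b ∧ b ∈ X)
      = (Finset.univ.filter fun b => G.Adj x b).filter (fun b => b ∈ X) by
    rw [Finset.filter_filter],
    show (Finset.univ.filter fun b => G.Adj x b ∧ b ∉ X)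
      = (Finset.univ.filter fun b => G.Adj x b).filter (fun b => ¬ b ∈ X) by
    rw [Finset.filter_filter]]
  exact Finset.card_filter_add_card_filter_not _

lemma degree_eq {k : ℕ} (hreg : ∀ v : V, (G.neighborSet v).ncard = k) (x : V) :
    (Finset.univ.filter fun b => G.Adj x b).card = k := by
  have := hreg x
  rw [Set.ncard_eq_toFinset_card'] at this
  rw [← this]
  congr 1
  ext b
  rw [Set.mem_toFinset]; simp

lemma indeg_le {X : Finset V} {x : V} (hx : x ∈ X) : indeg G X x ≤ X.card - 1 := by
  have h : (Finset.univ.filter fun b => G.Adj x b ∧ b ∈ X) ⊆ X.erase x := by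
    intro b hb
    simp only [Finset.mem_filter] at hb
    exact Finset.mem_erase.2 ⟨(G.ne_of_adj hb.2.1).symm, hb.2.2⟩
  calc indeg G X x ≤ (X.erase x).card := Finset.card_le_card h
    _ = X.card - 1 := Finset.card_erase_of_mem hx

lemma dcut_eq_sum_outdeg (X : Finset V) : dcut G X = ∑ x ∈ X, outdeg G X x := by
  rw [dcut, Finset.card_eq_sum_card_fiberwise (f := Prod.fst) (t := X)
    (fun p hp => ((mem_cutPairs G).1 hp).2.1)]
  apply Finset.sum_congr rfl
  intro a _
  unfold outdeg
  apply Finset.card_bij (fun p _ => p.2)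
  · rintro ⟨c, b⟩ hb
    simp only [Finset.mem_filter, mem_cutPairs] at hb
    obtain ⟨⟨h1, h2, h3⟩, rfl⟩ := hb
    simp only [Finset.mem_filter, Finset.mem_univ, true_and]
    exact ⟨h1, h3⟩
  · rintro ⟨c, b⟩ hb ⟨c', b'⟩ hb' h
    simp only [Finset.mem_filter, mem_cutPairs] at hb hb'
    simp only at h
    rw [Prod.ext_iff]
    exact ⟨hb.2.trans hb'.2.symm, h⟩
  · intro b hb
    simp only [Finset.mem_filter, Finset.mem_univ, true_and] at hb
    refine ⟨(a, b), ?_, rfl⟩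
    simp only [Finset.mem_filter, mem_cutPairs]
    exact ⟨⟨hb.1, ‹a ∈ X›, hb.2⟩, trivial⟩

end Deg

open SimpleGraph

lemma reachable_closed {G : SimpleGraph V} {C : Set V}
    (hC : ∀ ⦃u w : V⦄, u ∈ C → G.Adj u w → w ∈ C) {a b : V} (ha : a ∈ C)
    (h : G.Reachable a b) : b ∈ C := by
  obtain ⟨w⟩ := h
  induction w with
  | nil => exact ha
  | cons hadj p ih => exact ih (hC ha hadj)

/-- The edge-connectivity defining set. -/
lemma edgeConnectivity_set_nonempty [Fintype V] [Nontrivial V] (G : SimpleGraph V) :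
    {n | ∃ F : Finset (Sym2 V), ↑F ⊆ G.edgeSet ∧ F.card = n ∧
      ¬ (G.deleteEdges ↑F).Connected}.Nonempty := by
  classical
  refine ⟨G.edgeFinset.card, G.edgeFinset, ?_, rfl, ?_⟩
  · intro e he
    exact (SimpleGraph.mem_edgeFinset).1 he
  · intro hc
    obtain ⟨a, b, hab⟩ := exists_pair_ne V
    have hreach := hc.preconnected a b
    have : b ∈ ({a} : Set V) := by
      refine reachable_closed ?_ rfl hreach
      intro u w hu huw
      rw [SimpleGraph.deleteEdges_adj] at huw
      exact absurd (SimpleGraph.mem_edgeFinset.2 huw.1) huw.2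
    exact hab this.symm

section EC
variable [Fintype V] [DecidableEq V] (G : SimpleGraph V) [DecidableRel G.Adj]

lemma not_connected_of_cut {X : Finset V} (hX : X.Nonempty) (hX' : X ≠ Finset.univ) :
    ¬ (G.deleteEdges ↑(cutEdges G X)).Connected := by
  obtain ⟨a, ha⟩ := hX
  obtain ⟨b, hb⟩ : ∃ b, b ∉ X := by
    by_contra h
    push_neg at h
    exact hX' (Finset.eq_univ_iff_forall.2 h)
  intro hc
  have hreach := hc.preconnected a b
  have hclosed : ∀ ⦃u w : V⦄, u ∈ (↑X : Set V) →
      (G.deleteEdges ↑(cutEdges G X)).Adj u w → w ∈ (↑X : Set V) := by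
    intro u w hu huw
    rw [SimpleGraph.deleteEdges_adj] at huw
    by_contra hw
    exact huw.2 (by
      rw [Finset.mem_coe, mem_cutEdges]
      exact ⟨u, hu, w, hw, huw.1, rfl⟩)
  exact hb (reachable_closed hclosed ha hreach)

lemma lam_le_dcut {X : Finset V} (hX : X.Nonempty) (hX' : X ≠ Finset.univ) :
    edgeConnectivity G ≤ dcut G X := by
  apply Nat.sInf_le
  exact ⟨cutEdges G X, cutEdges_subset_edgeSet G X, card_cutEdges G X,
    not_connected_of_cut G hX hX'⟩

lemma exists_min_side [Nontrivial V] :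
    ∃ X : Finset V, X.Nonempty ∧ X ≠ Finset.univ ∧ dcut G X = edgeConnectivity G := by
  classical
  obtain ⟨F, hFsub, hFcard, hFdis⟩ :=
    Nat.sInf_mem (edgeConnectivity_set_nonempty G)
  set G' := G.deleteEdges ↑F with hG'
  have : ∃ a b : V, ¬ G'.Reachable a b := by
    by_contra h
    push_neg at h
    exact hFdis ⟨fun a b => h a b⟩
  obtain ⟨a, b, hab⟩ := this
  set X : Finset V := Finset.univ.filter (fun w => G'.Reachable a w) with hXdef
  have haX : a ∈ X := by
    simp only [hXdef, Finset.mem_filter, Finset.mem_univ, true_and]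
    exact SimpleGraph.Reachable.refl a
  have hbX : b ∉ X := by simp [hXdef, hab]
  have hXne : X.Nonempty := ⟨a, haX⟩
  have hXuniv : X ≠ Finset.univ := fun h => hbX (h ▸ Finset.mem_univ b)
  have hsub : cutEdges G X ⊆ F := by
    intro e he
    rw [mem_cutEdges] at he
    obtain ⟨u, hu, w, hw, huw, rfl⟩ := he
    by_contra heF
    apply hw
    simp only [hXdef, Finset.mem_filter, Finset.mem_univ, true_and] at hu ⊢
    exact hu.trans (SimpleGraph.Adj.reachable (by
      rw [hG', SimpleGraph.deleteEdges_adj]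
      exact ⟨huw, heF⟩))
  have h1 : dcut G X ≤ edgeConnectivity G := by
    rw [← card_cutEdges G X, edgeConnectivity, ← hFcard]
    exact Finset.card_le_card hsub
  exact ⟨X, hXne, hXuniv, le_antisymm h1 (lam_le_dcut G hXne hXuniv)⟩

lemma dcut_singleton {k : ℕ} (hreg : ∀ v : V, (G.neighborSet v).ncard = k) (v : V) :
    dcut G {v} = k := by
  rw [dcut_eq_sum_outdeg, Finset.sum_singleton, ← degree_eq hreg v]
  unfold outdeg
  congr 1
  apply Finset.filter_congr
  intro b _
  simp only [Finset.mem_singleton]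
  constructor
  · rintro ⟨h, _⟩; exact h
  · intro h; exact ⟨h, fun hb => G.ne_of_adj h (hb ▸ rfl)⟩

lemma lam_le_k [Nontrivial V] {k : ℕ} (hreg : ∀ v : V, (G.neighborSet v).ncard = k) :
    edgeConnectivity G ≤ k := by
  obtain ⟨v⟩ : Nonempty V := inferInstance
  rw [← dcut_singleton G hreg v]
  apply lam_le_dcut G ⟨v, Finset.mem_singleton_self v⟩
  intro h
  obtain ⟨w, hw⟩ := exists_ne v
  have := h ▸ Finset.mem_univ w
  rw [Finset.mem_singleton] at this
  exact hw this

end EC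

section Atom
variable [Fintype V] [DecidableEq V] (G : SimpleGraph V) [DecidableRel G.Adj]

lemma dcut_pos (hconn : G.Connected) {X : Finset V} (hX : X.Nonempty)
    (hX' : X ≠ Finset.univ) : 0 < dcut G X := by
  rcases Nat.eq_zero_or_pos (dcut G X) with h | h
  · exfalso
    have hemp : cutPairs G X = ∅ := Finset.card_eq_zero.1 h
    obtain ⟨a, ha⟩ := hX
    obtain ⟨b, hb⟩ : ∃ b, b ∉ X := by
      by_contra hh
      push_neg at hh
      exact hX' (Finset.eq_univ_iff_forall.2 hh)
    have hclosed : ∀ ⦃u w : V⦄, u ∈ (↑X : Set V) → G.Adj u w → w ∈ (↑X : Set V) := by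
      intro u w hu huw
      by_contra hw
      have : (u, w) ∈ cutPairs G X := (mem_cutPairs G).2 ⟨huw, hu, hw⟩
      simp [hemp] at this
    exact hb (reachable_closed hclosed ha (hconn.preconnected a b))
  · exact h

lemma dcut_image (φ : G ≃g G) (X : Finset V) : dcut G (X.image φ) = dcut G X := by
  symm
  unfold dcut
  apply Finset.card_bij (fun p _ => ((φ p.1 : V), (φ p.2 : V)))
  · rintro ⟨a, b⟩ h
    rw [mem_cutPairs] at h ⊢
    refine ⟨φ.map_adj_iff.2 h.1, Finset.mem_image_of_mem _ h.2.1, ?_⟩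
    intro hmem
    obtain ⟨c, hc, hcb⟩ := Finset.mem_image.1 hmem
    exact h.2.2 (φ.injective hcb ▸ hc)
  · rintro ⟨a, b⟩ _ ⟨c, d⟩ _ hh
    simp only [Prod.mk.injEq] at hh
    exact Prod.ext (φ.injective hh.1) (φ.injective hh.2)
  · rintro ⟨a, b⟩ h
    rw [mem_cutPairs] at h
    refine ⟨(φ.symm a, φ.symm b), ?_, by simp⟩
    rw [mem_cutPairs]
    refine ⟨?_, ?_, ?_⟩
    · have h1 := h.1
      rw [show a = φ (φ.symm a) by simp, show b = φ (φ.symm b) by simp] at h1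
      exact φ.map_adj_iff.1 h1
    · obtain ⟨c, hc, hca⟩ := Finset.mem_image.1 h.2.1
      have hc2 : φ.symm a = c := by
        apply φ.injective
        simpa using hca.symm
      rwa [hc2]
    · intro hmem
      apply h.2.2
      have h2 : φ (φ.symm b) ∈ Finset.image (⇑φ) X := Finset.mem_image_of_mem _ hmem
      simpa using h2

lemma crossing (hconn : G.Connected) {X Y : Finset V}
    (hXne : X.Nonempty) (hXuniv : X ≠ Finset.univ)
    (hYne : Y.Nonempty) (hYuniv : Y ≠ Finset.univ)
    (hdX : dcut G X = edgeConnectivity G) (hdY : dcut G Y = edgeConnectivity G)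
    (hcard : Y.card = X.card) (hhalf : 2 * X.card ≤ Fintype.card V)
    (hint : (X ∩ Y).Nonempty) (hne : X ≠ Y) :
    dcut G (X ∩ Y) = edgeConnectivity G ∧ dcut G (X \ Y) = edgeConnectivity G ∧
      (X ∩ Y).card < X.card ∧ (X \ Y).Nonempty := by
  have hXdiff : (X \ Y).Nonempty := by
    rw [Finset.sdiff_nonempty]
    intro hsub
    exact hne (Finset.eq_of_subset_of_card_le hsub (le_of_eq hcard))
  have hYdiff : (Y \ X).Nonempty := by
    rw [Finset.sdiff_nonempty]
    intro hsub
    exact hne (Finset.eq_of_subset_of_card_le hsub (le_of_eq hcard.symm)).symm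
  have hintuniv : X ∩ Y ≠ Finset.univ := by
    intro h
    exact hXuniv (Finset.univ_subset_iff.1 (h ▸ Finset.inter_subset_left))
  have huniuniv : X ∪ Y ≠ Finset.univ := by
    intro h
    have h1 : (X ∪ Y).card = Fintype.card V := by rw [h, Finset.card_univ]
    have h2 := Finset.card_inter_add_card_union X Y
    have h3 := Finset.card_pos.2 hint
    omega
  have hdiffuniv : X \ Y ≠ Finset.univ := by
    intro h
    obtain ⟨y, hy⟩ := hYne
    have := h ▸ Finset.mem_univ y
    rw [Finset.mem_sdiff] at this
    exact this.2 hy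
  have hYdiffuniv : Y \ X ≠ Finset.univ := by
    intro h
    obtain ⟨x, hx⟩ := hXne
    have := h ▸ Finset.mem_univ x
    rw [Finset.mem_sdiff] at this
    exact this.2 hx
  have l1 := lam_le_dcut G hint hintuniv
  have l2 := lam_le_dcut G (by
      obtain ⟨x, hx⟩ := hXne
      exact ⟨x, Finset.mem_union_left _ hx⟩) huniuniv
  have l3 := lam_le_dcut G hXdiff hdiffuniv
  have l4 := lam_le_dcut G hYdiff hYdiffuniv
  have s1 := dcut_submodular G X Y
  have s2 := dcut_posimodular G X Y
  rw [hdX, hdY] at s1 s2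
  refine ⟨by omega, by omega, ?_, hXdiff⟩
  obtain ⟨z, hz⟩ := hXdiff
  rw [Finset.mem_sdiff] at hz
  apply Finset.card_lt_card
  rw [Finset.ssubset_iff_of_subset Finset.inter_subset_left]
  exact ⟨z, hz.1, fun hmem => hz.2 (Finset.mem_inter.1 hmem).2⟩

end Atom

section Mader
variable [Fintype V] [DecidableEq V] (G : SimpleGraph V) [DecidableRel G.Adj]

lemma outdeg_const (hvt : VertexTransitive G) {B : Finset V}
    (hblock : ∀ φ : G ≃g G, B.image φ = B ∨ Disjoint B (B.image φ))
    {u w : V} (hu : u ∈ B) (hw : w ∈ B) : outdeg G B u = outdeg G B w := by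
  obtain ⟨φ, hφ⟩ := hvt u w
  have hBB : B.image φ = B := by
    rcases hblock φ with h | h
    · exact h
    · exfalso
      have hwB : w ∈ B.image φ := hφ ▸ Finset.mem_image_of_mem _ hu
      exact Finset.disjoint_left.1 h hw hwB
  have hmem : ∀ b : V, φ b ∈ B ↔ b ∈ B := by
    intro b
    constructor
    · intro hb
      rw [← hBB] at hb
      obtain ⟨c, hc, hcb⟩ := Finset.mem_image.1 hb
      exact φ.injective hcb ▸ hc
    · intro hb
      rw [← hBB]
      exact Finset.mem_image_of_mem _ hb
  rw [← hφ]
  unfold outdeg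
  apply Finset.card_bij (fun b _ => (φ b : V))
  · intro b hb
    simp only [Finset.mem_filter, Finset.mem_univ, true_and] at hb ⊢
    exact ⟨φ.map_adj_iff.2 hb.1, fun hmem' => hb.2 ((hmem b).1 hmem')⟩
  · intro b _ c _ h
    exact φ.injective h
  · intro b hb
    simp only [Finset.mem_filter, Finset.mem_univ, true_and] at hb
    refine ⟨φ.symm b, ?_, by simp⟩
    simp only [Finset.mem_filter, Finset.mem_univ, true_and]
    constructor
    · have h1 := hb.1
      rw [show b = φ (φ.symm b) by simp] at h1
      exact φ.map_adj_iff.1 h1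
    · intro hmem'
      have := (hmem (φ.symm b)).2 hmem'
      simp at this
      exact hb.2 this

lemma dcut_eq_card_mul (hvt : VertexTransitive G) {B : Finset V}
    (hblock : ∀ φ : G ≃g G, B.image φ = B ∨ Disjoint B (B.image φ))
    {u : V} (hu : u ∈ B) : dcut G B = B.card * outdeg G B u := by
  rw [dcut_eq_sum_outdeg]
  rw [Finset.sum_congr rfl (fun x hx => outdeg_const G hvt hblock hx hu)]
  rw [Finset.sum_const, smul_eq_mul]

lemma image_ne_univ {X : Finset V} (hX : X ≠ Finset.univ) (φ : G ≃g G) :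
    X.image φ ≠ Finset.univ := by
  intro h
  apply hX
  have hc : (X.image φ).card = X.card := Finset.card_image_of_injective _ φ.injective
  rw [h, Finset.card_univ] at hc
  exact Finset.eq_univ_of_card X hc.symm

lemma lam_eq_k [Nontrivial V] {k : ℕ} (hreg : GIsRegular G k) (hconn : G.Connected)
    (hvt : VertexTransitive G) : edgeConnectivity G = k := by
  classical
  -- the set of minimum cut sides
  set lam := edgeConnectivity G with hlam
  have hlamle : lam ≤ k := lam_le_k G hreg
  -- choose an atom
  set S : Finset (Finset V) := Finset.univ.filter
    (fun X => X.Nonempty ∧ X ≠ Finset.univ ∧ dcut G X = lam) with hSdef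
  have hSne : S.Nonempty := by
    obtain ⟨X, h1, h2, h3⟩ := exists_min_side G
    exact ⟨X, by simp [hSdef, h1, h2, h3, hlam]⟩
  obtain ⟨B, hBS, hBmin⟩ := S.exists_min_image Finset.card hSne
  simp only [hSdef, Finset.mem_filter, Finset.mem_univ, true_and] at hBS
  obtain ⟨hBne, hBuniv, hBd⟩ := hBS
  have hmem_S : ∀ Y : Finset V, Y.Nonempty → Y ≠ Finset.univ → dcut G Y = lam →
      B.card ≤ Y.card := by
    intro Y h1 h2 h3
    exact hBmin Y (by simp [hSdef, h1, h2, h3])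
  -- B has at most half the vertices
  have hBcardlt : B.card < Fintype.card V := by
    rcases lt_or_eq_of_le (Finset.card_le_univ B) with h | h
    · simpa using h
    · exact absurd (Finset.eq_univ_of_card B (by simpa using h)) hBuniv
  have hcomplne : Bᶜ.Nonempty := by
    rw [← Finset.card_pos, Finset.card_compl]
    omega
  have hcompluniv : Bᶜ ≠ Finset.univ := by
    intro h
    obtain ⟨x, hx⟩ := hBne
    have := h ▸ Finset.mem_univ x
    rw [Finset.mem_compl] at this
    exact this hx
  have hhalf : 2 * B.card ≤ Fintype.card V := by
    have := hmem_S Bᶜ hcomplne hcompluniv (by rw [dcut_compl]; exact hBd)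
    rw [Finset.card_compl] at this
    omega
  -- B is a block
  have hblock : ∀ φ : G ≃g G, B.image φ = B ∨ Disjoint B (B.image φ) := by
    intro φ
    have hYcard : (B.image φ).card = B.card := Finset.card_image_of_injective _ φ.injective
    by_cases hint : (B ∩ B.image φ).Nonempty
    · left
      by_cases heq : B = B.image φ
      · exact heq.symm
      · exfalso
        obtain ⟨hd1, _, hd3, _⟩ := crossing G hconn hBne hBuniv
          (hBne.image _) (image_ne_univ G hBuniv φ) hBd
          (by rw [dcut_image]; exact hBd) hYcard hhalf hint heq
        have hint_univ : B ∩ B.image φ ≠ Finset.univ := by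
          intro h
          exact hBuniv (Finset.univ_subset_iff.1 (h ▸ Finset.inter_subset_left))
        have := hmem_S (B ∩ B.image φ) hint hint_univ hd1
        omega
    · right
      rw [Finset.not_nonempty_iff_eq_empty] at hint
      exact Finset.disjoint_iff_inter_eq_empty.2 hint
  -- constant out-degree
  obtain ⟨u₀, hu₀⟩ := id hBne
  set t := outdeg G B u₀ with ht
  have hmul : B.card * t = lam := by
    rw [← dcut_eq_card_mul G hvt hblock hu₀, hBd]
  have hdeg : indeg G B u₀ + t = k := by
    rw [ht, indeg_add_outdeg, degree_eq hreg]
  have hindeg : indeg G B u₀ ≤ B.card - 1 := indeg_le hu₀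
  have hlampos : 0 < lam := hBd ▸ dcut_pos G hconn hBne hBuniv
  have htpos : 0 < t := by
    rcases Nat.eq_zero_or_pos t with h | h
    · rw [h, Nat.mul_zero] at hmul; omega
    · exact h
  have hcardpos : 0 < B.card := Finset.card_pos.2 ⟨u₀, hu₀⟩
  have hkey : k ≤ lam := by
    have h1 : B.card - 1 ≤ (B.card - 1) * t := Nat.le_mul_of_pos_right _ htpos
    have h2 : (B.card - 1) * t + t = B.card * t := by
      have : B.card - 1 + 1 = B.card := Nat.succ_pred_eq_of_pos hcardpos
      calc (B.card - 1) * t + t = ((B.card - 1) + 1) * t := by ring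
        _ = B.card * t := by rw [this]
    omega
  omega

end Mader

section Super
variable [Fintype V] [DecidableEq V] (G : SimpleGraph V) [DecidableRel G.Adj]

lemma clique_of_nontrivial_mincut [Nontrivial V] {k : ℕ} (hreg : GIsRegular G k)
    (hconn : G.Connected) (hvt : VertexTransitive G) (hk : 3 ≤ k)
    {X0 : Finset V} (hX0 : 2 ≤ X0.card) (hX0c : 2 ≤ X0ᶜ.card)
    (hX0d : dcut G X0 = edgeConnectivity G) :
    ∃ S : Finset V, S.card = k ∧ G.IsClique ↑S := by
  classical
  set lam := edgeConnectivity G with hlam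
  have hlamk : lam = k := lam_eq_k G hreg hconn hvt
  set S2 : Finset (Finset V) := Finset.univ.filter
    (fun X => 2 ≤ X.card ∧ 2 ≤ Xᶜ.card ∧ dcut G X = lam) with hS2def
  have hS2ne : S2.Nonempty := ⟨X0, by simp [hS2def, hX0, hX0c, hX0d]⟩
  obtain ⟨B, hBS, hBmin⟩ := S2.exists_min_image Finset.card hS2ne
  simp only [hS2def, Finset.mem_filter, Finset.mem_univ, true_and] at hBS
  obtain ⟨hB2, hBc2, hBd⟩ := hBS
  have hmem_S2 : ∀ Y : Finset V, 2 ≤ Y.card → 2 ≤ Yᶜ.card → dcut G Y = lam →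
      B.card ≤ Y.card := by
    intro Y h1 h2 h3
    exact hBmin Y (by simp [hS2def, h1, h2, h3])
  have hBne : B.Nonempty := Finset.card_pos.1 (by omega)
  have hBuniv : B ≠ Finset.univ := by
    intro h
    rw [h, Finset.compl_univ, Finset.card_empty] at hBc2
    omega
  have hcardV : B.card + Bᶜ.card = Fintype.card V := by
    rw [Finset.card_compl]
    have h := Finset.card_le_card (Finset.subset_univ B)
    rw [Finset.card_univ] at h
    omega
  have hhalf : 2 * B.card ≤ Fintype.card V := by
    have := hmem_S2 Bᶜ hBc2 (by rwa [compl_compl]) (by rw [dcut_compl]; exact hBd)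
    omega
  -- B is a block
  have hblock : ∀ φ : G ≃g G, B.image φ = B ∨ Disjoint B (B.image φ) := by
    intro φ
    have hYcard : (B.image φ).card = B.card := Finset.card_image_of_injective _ φ.injective
    by_cases hint : (B ∩ B.image φ).Nonempty
    · left
      by_cases heq : B = B.image φ
      · exact heq.symm
      · exfalso
        obtain ⟨hd1, hd2, hd3, hd4⟩ := crossing G hconn hBne hBuniv
          (hBne.image _) (image_ne_univ G hBuniv φ) hBd
          (by rw [dcut_image]; exact hBd) hYcard hhalf hint heq
        -- both B ∩ Y and B \ Y are singletons
        have hci : (B ∩ B.image φ).card = 1 := by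
          rcases Nat.lt_or_ge (B ∩ B.image φ).card 2 with h | h
          · have := Finset.card_pos.2 hint; omega
          · exfalso
            have hcc : 2 ≤ (B ∩ B.image φ)ᶜ.card := by
              calc 2 ≤ Bᶜ.card := hBc2
                _ ≤ (B ∩ B.image φ)ᶜ.card :=
                  Finset.card_le_card (Finset.compl_subset_compl.2 Finset.inter_subset_left)
            have := hmem_S2 _ h hcc hd1
            omega
        have hcd : (B \ B.image φ).card = 1 := by
          rcases Nat.lt_or_ge (B \ B.image φ).card 2 with h | h
          · have := Finset.card_pos.2 hd4; omega
          · exfalso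
            have hcc : 2 ≤ (B \ B.image φ)ᶜ.card := by
              calc 2 ≤ Bᶜ.card := hBc2
                _ ≤ (B \ B.image φ)ᶜ.card :=
                  Finset.card_le_card (Finset.compl_subset_compl.2 Finset.sdiff_subset)
            have hlt : (B \ B.image φ).card < B.card := by
              apply Finset.card_lt_card
              constructor
              · exact Finset.sdiff_subset
              · intro hsub
                obtain ⟨z, hz⟩ := hint
                rw [Finset.mem_inter] at hz
                have := hsub hz.1
                rw [Finset.mem_sdiff] at this
                exact this.2 hz.2
            have := hmem_S2 _ h hcc hd2
            omega
        -- so B has exactly 2 elements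
        have hB2' : B.card = 2 := by
          have := Finset.card_sdiff_add_card_inter B (B.image φ)
          omega
        -- but then dcut B ≥ 2k - 2 > k
        have hout : ∀ x ∈ B, k - 1 ≤ outdeg G B x := by
          intro x hx
          have h1 := indeg_add_outdeg (G := G) B x
          rw [degree_eq hreg] at h1
          have h2 : indeg G B x ≤ B.card - 1 := indeg_le hx
          omega
        have hsum : B.card * (k - 1) ≤ dcut G B := by
          rw [dcut_eq_sum_outdeg]
          calc B.card * (k - 1) = ∑ _x ∈ B, (k - 1) := by rw [Finset.sum_const, smul_eq_mul]
            _ ≤ ∑ x ∈ B, outdeg G B x := Finset.sum_le_sum hout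
        rw [hBd, hlamk, hB2'] at hsum
        omega
    · right
      rw [Finset.not_nonempty_iff_eq_empty] at hint
      exact Finset.disjoint_iff_inter_eq_empty.2 hint
  -- constant out-degree
  obtain ⟨u₀, hu₀⟩ := id hBne
  set t := outdeg G B u₀ with ht
  have hmul : B.card * t = k := by
    rw [← hlamk, ← hBd, dcut_eq_card_mul G hvt hblock hu₀]
  have hdeg : indeg G B u₀ + t = k := by
    rw [ht, indeg_add_outdeg, degree_eq hreg]
  have hindeg : indeg G B u₀ ≤ B.card - 1 := indeg_le hu₀
  have htpos : 0 < t := by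
    rcases Nat.eq_zero_or_pos t with h | h
    · rw [h, Nat.mul_zero] at hmul; omega
    · exact h
  have ht1 : t = 1 := by
    by_contra hne
    have ht2 : 2 ≤ t := by omega
    have := Nat.add_le_mul hB2 ht2
    omega
  have hBk : B.card = k := by rw [ht1, Nat.mul_one] at hmul; exact hmul
  -- every vertex of B is adjacent to all others in B
  have hclique : G.IsClique ↑B := by
    intro x hx y hy hxy
    rw [Finset.mem_coe] at hx hy
    have houtx : outdeg G B x = 1 := by
      rw [outdeg_const G hvt hblock hx hu₀, ← ht, ht1]
    have hindx : indeg G B x = B.card - 1 := by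
      have h1 := indeg_add_outdeg (G := G) B x
      rw [degree_eq hreg, houtx] at h1
      omega
    have hsub : (Finset.univ.filter fun b => G.Adj x b ∧ b ∈ B) = B.erase x := by
      apply Finset.eq_of_subset_of_card_le
      · intro b hb
        simp only [Finset.mem_filter] at hb
        exact Finset.mem_erase.2 ⟨(G.ne_of_adj hb.2.1).symm, hb.2.2⟩
      · rw [Finset.card_erase_of_mem hx]
        exact le_of_eq hindx.symm
    have : y ∈ B.erase x := Finset.mem_erase.2 ⟨hxy.symm, hy⟩
    rw [← hsub] at this
    simp only [Finset.mem_filter] at this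
    exact this.2.1
  exact ⟨B, hBk, hclique⟩

end Super

section Bridge
variable [Fintype V] [DecidableEq V] (G : SimpleGraph V) [DecidableRel G.Adj]

lemma cut_set_eq (X : Finset V) :
    {e : Sym2 V | ∃ a ∈ (↑X : Set V), ∃ b ∈ (↑X : Set V)ᶜ, G.Adj a b ∧ e = s(a, b)}
      = ↑(cutEdges G X) := by
  ext e
  simp only [Set.mem_setOf_eq, Finset.mem_coe, mem_cutEdges, Set.mem_compl_iff,
    Set.mem_setOf_eq, Finset.coe_sort_coe]

lemma cutEdges_compl (X : Finset V) : cutEdges G Xᶜ = cutEdges G X := by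
  ext e
  simp only [mem_cutEdges, Finset.mem_compl, not_not]
  constructor
  · rintro ⟨a, ha, b, hb, hab, rfl⟩
    exact ⟨b, hb, a, ha, hab.symm, Sym2.eq_swap⟩
  · rintro ⟨a, ha, b, hb, hab, rfl⟩
    exact ⟨b, hb, a, ha, hab.symm, Sym2.eq_swap⟩

lemma cutEdges_singleton (v : V) :
    (↑(cutEdges G {v}) : Set (Sym2 V)) = G.incidenceSet v := by
  ext e
  simp only [Finset.mem_coe, mem_cutEdges, Finset.mem_singleton]
  constructor
  · rintro ⟨a, rfl, b, hb, hab, rfl⟩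
    exact ⟨hab, Sym2.mem_mk_left a b⟩
  · rintro ⟨he, hv⟩
    induction e with
    | _ x y =>
      rw [Sym2.mem_iff] at hv
      rw [SimpleGraph.mem_edgeSet] at he
      rcases hv with rfl | rfl
      · exact ⟨v, rfl, y, fun h => G.ne_of_adj he h.symm, he, rfl⟩
      · exact ⟨v, rfl, x, fun h => G.ne_of_adj he.symm h.symm, he.symm, Sym2.eq_swap⟩

lemma clique_outdeg_one {k : ℕ} (hreg : GIsRegular G k) {S : Finset V}
    (hcard : S.card = k) (hclique : G.IsClique ↑S) {x : V} (hx : x ∈ S) :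
    outdeg G S x = 1 := by
  have h1 : indeg G S x + outdeg G S x = k := by
    rw [indeg_add_outdeg, degree_eq hreg]
  have h2 : indeg G S x ≤ S.card - 1 := indeg_le hx
  have h3 : S.card - 1 ≤ indeg G S x := by
    have hsub : S.erase x ⊆ Finset.univ.filter fun b => G.Adj x b ∧ b ∈ S := by
      intro b hb
      rw [Finset.mem_erase] at hb
      simp only [Finset.mem_filter, Finset.mem_univ, true_and]
      exact ⟨hclique hx hb.2 (Ne.symm hb.1), hb.2⟩
    calc S.card - 1 = (S.erase x).card := (Finset.card_erase_of_mem hx).symm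
      _ ≤ _ := Finset.card_le_card hsub
  have hk1 : 0 < S.card := Finset.card_pos.2 ⟨x, hx⟩
  omega

lemma dcut_clique {k : ℕ} (hreg : GIsRegular G k) {S : Finset V}
    (hcard : S.card = k) (hclique : G.IsClique ↑S) (hk : 1 ≤ k) :
    dcut G S = k := by
  rw [dcut_eq_sum_outdeg,
    Finset.sum_congr rfl (fun x hx => clique_outdeg_one G hreg hcard hclique hx),
    Finset.sum_const, smul_eq_mul, Nat.mul_one, hcard]

lemma card_ge_k {k : ℕ} (hreg : GIsRegular G k) [Nonempty V] :
    k + 1 ≤ Fintype.card V := by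
  obtain ⟨v⟩ : Nonempty V := inferInstance
  have h1 : (G.neighborSet v).ncard = k := hreg v
  rw [Set.ncard_eq_toFinset_card'] at h1
  have hsub : (G.neighborSet v).toFinset ⊆ Finset.univ.erase v := by
    intro b hb
    rw [Set.mem_toFinset, SimpleGraph.mem_neighborSet] at hb
    exact Finset.mem_erase.2 ⟨(G.ne_of_adj hb).symm, Finset.mem_univ b⟩
  have h2 := Finset.card_le_card hsub
  rw [h1, Finset.card_erase_of_mem (Finset.mem_univ v), Finset.card_univ] at h2
  have h3 : 0 < Fintype.card V := Fintype.card_pos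
  omega

end Bridge

section Degenerate
variable [Fintype V]

lemma univ_eq_of_closed {G : SimpleGraph V} (hconn : G.Connected) {C : Set V}
    (hC : ∀ ⦃u w : V⦄, u ∈ C → G.Adj u w → w ∈ C) {a : V} (ha : a ∈ C) :
    ∀ z : V, z ∈ C := fun z => reachable_closed hC ha (hconn.preconnected a z)

lemma k0_top {G : SimpleGraph V} (hreg : GIsRegular G 0) (hconn : G.Connected) :
    G = ⊤ := by
  have hsub : ∀ x y : V, x = y := by
    intro x y
    have hC : ∀ ⦃u w : V⦄, u ∈ ({x} : Set V) → G.Adj u w → w ∈ ({x} : Set V) := by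
      intro u w hu huw
      exfalso
      have h0 : (G.neighborSet u).ncard = 0 := hreg u
      rw [Set.ncard_eq_zero (Set.toFinite _)] at h0
      exact absurd (h0 ▸ huw : w ∈ (∅ : Set V)) (Set.notMem_empty w)
    exact (univ_eq_of_closed hconn hC rfl y).symm
  ext x y
  simp only [SimpleGraph.top_adj]
  constructor
  · intro h; exact absurd (hsub x y) (G.ne_of_adj h)
  · intro h; exact absurd (hsub x y) h

lemma k1_top {G : SimpleGraph V} (hreg : GIsRegular G 1) (hconn : G.Connected) :
    G = ⊤ := by
  obtain ⟨v⟩ := hconn.nonempty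
  obtain ⟨w, hw⟩ := Set.ncard_eq_one.1 (hreg v)
  have hadj : G.Adj v w := by
    have : w ∈ G.neighborSet v := hw ▸ rfl
    exact this
  have hNw : G.neighborSet w = {v} := by
    obtain ⟨u, hu⟩ := Set.ncard_eq_one.1 (hreg w)
    have : v ∈ G.neighborSet w := hadj.symm
    rw [hu] at this
    rw [hu, this]
  have hC : ∀ ⦃u z : V⦄, u ∈ ({v, w} : Set V) → G.Adj u z → z ∈ ({v, w} : Set V) := by
    intro u z hu huz
    rcases hu with rfl | rfl
    · have : z ∈ G.neighborSet u := huz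
      rw [hw] at this
      exact Or.inr this
    · have : z ∈ G.neighborSet u := huz
      rw [hNw] at this
      exact Or.inl this
  have hall := univ_eq_of_closed hconn hC (Or.inl rfl)
  ext x y
  simp only [SimpleGraph.top_adj]
  constructor
  · intro h; exact G.ne_of_adj h
  · intro hxy
    rcases hall x with rfl | rfl <;> rcases hall y with rfl | rfl
    · exact absurd rfl hxy
    · exact hadj
    · exact hadj.symm
    · exact absurd rfl hxy

end Degenerate

section K2
variable [Fintype V] [DecidableEq V] (G : SimpleGraph V) [DecidableRel G.Adj]

lemma k2_case (hreg : GIsRegular G 2) (hconn : G.Connected) (hvt : VertexTransitive G)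
    (hnc : G ≠ ⊤) :
    (¬ ∀ F : Set (Sym2 V), IsEdgeCut G F → F.ncard = edgeConnectivity G →
      ∃ v : V, F = G.incidenceSet v) ∧
    (∃ S : Finset V, S.card = 2 ∧ G.IsClique ↑S) := by
  classical
  obtain ⟨v⟩ := hconn.nonempty
  obtain ⟨a, b, hab, hNv⟩ := Set.ncard_eq_two.1 (hreg v)
  have hadjva : G.Adj v a := by
    have : a ∈ G.neighborSet v := by rw [hNv]; exact Or.inl rfl
    exact this
  have hadjvb : G.Adj v b := by
    have : b ∈ G.neighborSet v := by rw [hNv]; exact Or.inr rfl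
    exact this
  have hva : v ≠ a := G.ne_of_adj hadjva
  have hvb : v ≠ b := G.ne_of_adj hadjvb
  -- the other neighbor of a
  have hNa' : ∃ a', (G.neighborSet a = {v, a'}) ∧ a' ≠ v := by
    obtain ⟨c, d, hcd, hNa⟩ := Set.ncard_eq_two.1 (hreg a)
    have hvmem : v ∈ G.neighborSet a := hadjva.symm
    rw [hNa] at hvmem
    rcases hvmem with rfl | rfl
    · exact ⟨d, hNa, fun h => hcd h.symm⟩
    · exact ⟨c, by rw [hNa, Set.pair_comm], hcd⟩
  obtain ⟨a', hNa, ha'v⟩ := hNa'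
  have hadjaa' : G.Adj a a' := by
    have : a' ∈ G.neighborSet a := by rw [hNa]; exact Or.inr rfl
    exact this
  have ha'a : a' ≠ a := fun h => G.ne_of_adj hadjaa' h.symm
  have : Nontrivial V := ⟨v, a, hva⟩
  -- the clique part holds always
  have hcliquepart : ∃ S : Finset V, S.card = 2 ∧ G.IsClique ↑S := by
    refine ⟨{v, a}, Finset.card_pair hva, ?_⟩
    intro x hx y hy hxy
    simp only [Finset.coe_insert, Set.mem_insert_iff, Finset.coe_singleton,
      Set.mem_singleton_iff] at hx hy
    rcases hx with rfl | rfl <;> rcases hy with rfl | rfl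
    · exact absurd rfl hxy
    · exact hadjva
    · exact hadjva.symm
    · exact absurd rfl hxy
  by_cases hb' : a' = b
  · -- then G = K₃ = ⊤, contradiction
    exfalso
    apply hnc
    have hadjab : G.Adj a b := hb' ▸ hadjaa'
    have hNa2 : G.neighborSet a = {v, b} := by rw [hNa, hb']
    have hNb : G.neighborSet b = {v, a} := by
      symm
      apply Set.eq_of_subset_of_ncard_le
      · intro z hz
        rcases hz with rfl | rfl
        · exact hadjvb.symm
        · exact hadjab.symm
      · rw [hreg b, Set.ncard_pair hva]
      · exact Set.toFinite _
    have hC : ∀ ⦃u z : V⦄, u ∈ ({v, a, b} : Set V) → G.Adj u z →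
        z ∈ ({v, a, b} : Set V) := by
      intro u z hu huz
      have hz : z ∈ G.neighborSet u := huz
      rcases hu with rfl | rfl | rfl
      · rw [hNv] at hz
        rcases hz with rfl | rfl
        · exact Or.inr (Or.inl rfl)
        · exact Or.inr (Or.inr rfl)
      · rw [hNa2] at hz
        rcases hz with rfl | rfl
        · exact Or.inl rfl
        · exact Or.inr (Or.inr rfl)
      · rw [hNb] at hz
        rcases hz with rfl | rfl
        · exact Or.inl rfl
        · exact Or.inr (Or.inl rfl)
    have hall := univ_eq_of_closed hconn hC (Or.inl rfl)
    ext x y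
    simp only [SimpleGraph.top_adj]
    constructor
    · intro h; exact G.ne_of_adj h
    · intro hxy
      rcases hall x with rfl | rfl | rfl <;> rcases hall y with rfl | rfl | rfl <;>
        first
          | exact absurd rfl hxy
          | exact hadjva
          | exact hadjva.symm
          | exact hadjvb
          | exact hadjvb.symm
          | exact hadjab
          | exact hadjab.symm
  · -- main subcase: nontrivial min cut exists
    have hlam : edgeConnectivity G = 2 := lam_eq_k G hreg hconn hvt
    set X : Finset V := {v, a} with hX
    have hbX : b ∉ X := by
      simp only [hX, Finset.mem_insert, Finset.mem_singleton]
      push_neg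
      exact ⟨fun h => hvb h.symm, fun h => hab h.symm⟩
    have ha'X : a' ∉ X := by
      simp only [hX, Finset.mem_insert, Finset.mem_singleton]
      push_neg
      exact ⟨ha'v, ha'a⟩
    have hvX : v ∈ X := by simp [hX]
    have haX : a ∈ X := by simp [hX]
    have houtv : outdeg G X v = 1 := by
      unfold outdeg
      rw [show (Finset.univ.filter fun c => G.Adj v c ∧ c ∉ X) = {b} from ?_]
      · exact Finset.card_singleton b
      · ext c
        simp only [Finset.mem_filter, Finset.mem_univ, true_and, Finset.mem_singleton]
        constructor
        · rintro ⟨hadj, hc⟩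
          have : c ∈ G.neighborSet v := hadj
          rw [hNv] at this
          rcases this with rfl | rfl
          · exact absurd haX hc
          · rfl
        · rintro rfl
          exact ⟨hadjvb, hbX⟩
    have houta : outdeg G X a = 1 := by
      unfold outdeg
      rw [show (Finset.univ.filter fun c => G.Adj a c ∧ c ∉ X) = {a'} from ?_]
      · exact Finset.card_singleton a'
      · ext c
        simp only [Finset.mem_filter, Finset.mem_univ, true_and, Finset.mem_singleton]
        constructor
        · rintro ⟨hadj, hc⟩
          have : c ∈ G.neighborSet a := hadj
          rw [hNa] at this
          rcases this with rfl | rfl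
          · exact absurd hvX hc
          · rfl
        · rintro rfl
          exact ⟨hadjaa', ha'X⟩
    have hdX : dcut G X = 2 := by
      rw [dcut_eq_sum_outdeg, hX, Finset.sum_pair hva, ← hX, houtv, houta]
    refine ⟨?_, hcliquepart⟩
    intro hLHS
    obtain ⟨u, hu⟩ := hLHS ↑(cutEdges G X)
      ⟨↑X, ⟨v, by simpa using hvX⟩, ⟨b, by simpa using hbX⟩, (cut_set_eq G X).symm⟩
      (by rw [Set.ncard_coe_finset, card_cutEdges, hdX, hlam])
    have he1 : s(v, b) ∈ (↑(cutEdges G X) : Set (Sym2 V)) := by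
      rw [Finset.mem_coe, mem_cutEdges]
      exact ⟨v, hvX, b, hbX, hadjvb, rfl⟩
    have he2 : s(a, a') ∈ (↑(cutEdges G X) : Set (Sym2 V)) := by
      rw [Finset.mem_coe, mem_cutEdges]
      exact ⟨a, haX, a', ha'X, hadjaa', rfl⟩
    rw [hu] at he1 he2
    have hu1 : u ∈ s(v, b) := he1.2
    have hu2 : u ∈ s(a, a') := he2.2
    rw [Sym2.mem_iff] at hu1 hu2
    rcases hu1 with rfl | rfl <;> rcases hu2 with h | h
    · exact hva h
    · exact ha'v h.symm
    · exact hab h.symm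
    · exact hb' h.symm

end K2
theorem stmt18 [Fintype V] (G : SimpleGraph V) (k : ℕ)
    (hreg : GIsRegular G k) (hconn : G.Connected)
    (hvt : VertexTransitive G)
    (hnotcomplete : G ≠ ⊤)
    (hnotcycle : ∀ n : ℕ, IsEmpty (G ≃g cycleGraph n)) :
    (∀ F : Set (Sym2 V), IsEdgeCut G F → F.ncard = edgeConnectivity G →
      ∃ v : V, F = G.incidenceSet v) ↔
    ¬ ∃ S : Finset V, S.card = k ∧ G.IsClique ↑S := by
  classical
  have : Nonempty V := hconn.nonempty
  rcases Nat.lt_or_ge k 3 with hk | hk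
  · interval_cases k
    · exact absurd (k0_top hreg hconn) hnotcomplete
    · exact absurd (k1_top hreg hconn) hnotcomplete
    · obtain ⟨h1, h2⟩ := k2_case G hreg hconn hvt hnotcomplete
      exact ⟨fun hL => absurd hL h1, fun hR => absurd h2 hR⟩
  · -- main case k ≥ 3
    have hcardV := card_ge_k G hreg
    have hnt : Nontrivial V := Fintype.one_lt_card_iff_nontrivial.1 (by omega)
    have hlam : edgeConnectivity G = k := lam_eq_k G hreg hconn hvt
    constructor
    · -- all min cuts trivial → no k-clique
      intro hLHS
      rintro ⟨S, hScard, hSclique⟩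
      have hSne : S.Nonempty := Finset.card_pos.1 (by omega)
      have hScne : Sᶜ.Nonempty := by
        rw [← Finset.card_pos, Finset.card_compl, hScard]
        omega
      have hdS : dcut G S = k := dcut_clique G hreg hScard hSclique (by omega)
      obtain ⟨s₀, hs₀⟩ := id hSne
      obtain ⟨w₀, hw₀⟩ := id hScne
      obtain ⟨u, hu⟩ := hLHS ↑(cutEdges G S)
        ⟨↑S, ⟨s₀, by simpa using hs₀⟩,
          ⟨w₀, by simpa using (Finset.mem_compl.1 hw₀)⟩, (cut_set_eq G S).symm⟩
        (by rw [Set.ncard_coe_finset, card_cutEdges, hdS, hlam])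
      have hexit : ∀ x ∈ S, ∃ c, G.Adj x c ∧ c ∉ S := by
        intro x hx
        have h := clique_outdeg_one G hreg hScard hSclique hx
        unfold outdeg at h
        have hpos : 0 < (Finset.univ.filter fun b => G.Adj x b ∧ b ∉ S).card := by omega
        obtain ⟨c, hc⟩ := Finset.card_pos.1 hpos
        simp only [Finset.mem_filter, Finset.mem_univ, true_and] at hc
        exact ⟨c, hc⟩
      have hedge_mem : ∀ x ∈ S, ∀ c, G.Adj x c → c ∉ S →
          s(x, c) ∈ G.incidenceSet u := by
        intro x hx c hadj hc
        rw [← hu, Finset.mem_coe, mem_cutEdges]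
        exact ⟨x, hx, c, hc, hadj, rfl⟩
      by_cases huS : u ∈ S
      · obtain ⟨x, hx, hxu⟩ := Finset.exists_mem_ne (s := S) (by omega) u
        obtain ⟨c, hadj, hc⟩ := hexit x hx
        have hmem := (hedge_mem x hx c hadj hc).2
        rw [Sym2.mem_iff] at hmem
        rcases hmem with rfl | rfl
        · exact hxu rfl
        · exact hc huS
      · -- u ∉ S : G would be complete
        exfalso
        apply hnotcomplete
        have hadjxu : ∀ x ∈ S, G.Adj x u := by
          intro x hx
          obtain ⟨c, hadj, hc⟩ := hexit x hx
          have hmem := (hedge_mem x hx c hadj hc).2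
          rw [Sym2.mem_iff] at hmem
          rcases hmem with rfl | rfl
          · exact absurd hx huS
          · exact hadj
        have hadju : ∀ w, G.Adj u w → w ∈ S := by
          intro w hadj
          have hmem : s(u, w) ∈ G.incidenceSet u :=
            ⟨hadj, Sym2.mem_mk_left u w⟩
          rw [← hu, Finset.mem_coe, mem_cutEdges] at hmem
          obtain ⟨p, hp, q, hq, hpq, heq⟩ := hmem
          rw [Sym2.eq_iff] at heq
          rcases heq with ⟨rfl, rfl⟩ | ⟨rfl, rfl⟩
          · exact absurd hp huS
          · exact hp
        have hC : ∀ ⦃z w : V⦄, z ∈ (↑S ∪ {u} : Set V) → G.Adj z w →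
            w ∈ (↑S ∪ {u} : Set V) := by
          intro z w hz hadj
          rcases hz with hz | hz
          · rw [Finset.mem_coe] at hz
            by_cases hw : w ∈ S
            · exact Or.inl hw
            · have hmem := (hedge_mem z hz w hadj hw).2
              rw [Sym2.mem_iff] at hmem
              rcases hmem with rfl | rfl
              · exact absurd hz huS
              · exact Or.inr rfl
          · rw [Set.mem_singleton_iff] at hz
            subst hz
            exact Or.inl (by rw [Finset.mem_coe]; exact hadju w hadj)
        have hall := univ_eq_of_closed hconn hC (Or.inr rfl : u ∈ (↑S ∪ {u} : Set V))
        ext x y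
        simp only [SimpleGraph.top_adj]
        constructor
        · intro h; exact G.ne_of_adj h
        · intro hxy
          rcases hall x with hx | hx <;> rcases hall y with hy | hy
          · exact hSclique hx hy hxy
          · rw [Set.mem_singleton_iff] at hy
            subst hy
            exact hadjxu x (Finset.mem_coe.1 hx)
          · rw [Set.mem_singleton_iff] at hx
            subst hx
            exact (hadjxu y (Finset.mem_coe.1 hy)).symm
          · rw [Set.mem_singleton_iff] at hx hy
            exact absurd (hx.trans hy.symm) hxy
    · -- no k-clique → all min cuts trivial
      intro hnoclique F hF hFcard
      obtain ⟨Xs, hXne, hXcne, hFeq⟩ := hF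
      set X : Finset V := Xs.toFinset with hXdef
      have hcoe : (↑X : Set V) = Xs := Set.coe_toFinset Xs
      have hFeq' : F = ↑(cutEdges G X) := by
        rw [hFeq, ← hcoe, cut_set_eq G X]
      have hd : dcut G X = edgeConnectivity G := by
        rw [← card_cutEdges, ← Set.ncard_coe_finset, ← hFeq', hFcard]
      have hXne' : X.Nonempty := by
        obtain ⟨x, hx⟩ := hXne
        exact ⟨x, by rw [hXdef, Set.mem_toFinset]; exact hx⟩
      have hXcne' : Xᶜ.Nonempty := by
        obtain ⟨x, hx⟩ := hXcne
        refine ⟨x, Finset.mem_compl.2 ?_⟩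
        rw [hXdef, Set.mem_toFinset]
        exact hx
      by_cases h2 : 2 ≤ X.card ∧ 2 ≤ Xᶜ.card
      · exact absurd
          (clique_of_nontrivial_mincut G hreg hconn hvt hk h2.1 h2.2 hd) hnoclique
      · push_neg at h2
        rcases Nat.lt_or_ge X.card 2 with hc1 | hc1
        · have : X.card = 1 := by
            have := Finset.card_pos.2 hXne'
            omega
          obtain ⟨v, hv⟩ := Finset.card_eq_one.1 this
          refine ⟨v, ?_⟩
          rw [hFeq', hv, cutEdges_singleton]
        · have hc2 : Xᶜ.card = 1 := by
            have h3 := h2 hc1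
            have := Finset.card_pos.2 hXcne'
            omega
          obtain ⟨w, hw⟩ := Finset.card_eq_one.1 hc2
          refine ⟨w, ?_⟩
          rw [hFeq', ← cutEdges_compl, hw, cutEdges_singleton]
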